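/- If real numbers k₃,k₄,k₅ satisfy k₃ > 0, k₅ > 0, k₃²k₄ − k₃k₅ − k₄² > 0, and k₃²k₄² − k₃³k₅ − k₄³ > 0, then the matrix Z(k₃,k₄,k₅) is positive definite. -/

import Mathlib

open Matrix

/-- The 3×3 symmetric matrix `Z(k₃,k₄,k₅)` from the paper. -/
noncomputable def Zmat (k3 k4 k5 : ℝ) : Matrix (Fin 3) (Fin 3) ℝ :=
  !![k3,  k4,        -k5;
     k4,  k3*k4 - k5, -(k3*k5);
     -k5, -(k3*k5),   k4*k5]

/-- Positivity of the associated quadratic form. -/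
lemma quad_pos (k3 k4 k5 a b c : ℝ) (h1 : k3 > 0) (h2 : k5 > 0)
    (h3 : k3^2*k4 - k3*k5 - k4^2 > 0) (h4 : k3^2*k4^2 - k3^3*k5 - k4^3 > 0)
    (hx : a ≠ 0 ∨ b ≠ 0 ∨ c ≠ 0) :
    0 < k3*a^2 + (k3*k4 - k5)*b^2 + k4*k5*c^2 + 2*k4*a*b - 2*k5*a*c - 2*k3*k5*b*c := by
  have key : k3 * (k3^2*k4 - k3*k5 - k4^2) * (k3*a^2 + (k3*k4 - k5)*b^2 + k4*k5*c^2
      + 2*k4*a*b - 2*k5*a*c - 2*k3*k5*b*c)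
      = (k3^2*k4 - k3*k5 - k4^2) * (k3*a + k4*b - k5*c)^2
        + ((k3^2*k4 - k3*k5 - k4^2)*b + k5*(k4 - k3^2)*c)^2
        + k3*k5*(k3^2*k4^2 - k3^3*k5 - k4^3 + k5^2) * c^2 := by
    ring
  have hk3A : 0 < k3 * (k3^2*k4 - k3*k5 - k4^2) := mul_pos h1 h3
  rcases eq_or_ne c 0 with hc | hc
  · subst hc
    rcases eq_or_ne b 0 with hb | hb
    · subst hb
      have ha : a ≠ 0 := by tauto
      nlinarith [mul_pos h1 (mul_self_pos.mpr ha)]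
    · nlinarith [mul_nonneg h3.le (sq_nonneg (k3*a + k4*b)),
        mul_pos (mul_pos h3 h3) (mul_self_pos.mpr hb)]
  · have h6 : (0:ℝ) < k3^2*k4^2 - k3^3*k5 - k4^3 + k5^2 := by nlinarith
    have h5 : 0 < k3*k5*(k3^2*k4^2 - k3^3*k5 - k4^3 + k5^2) :=
      mul_pos (mul_pos h1 h2) h6
    nlinarith [mul_nonneg h3.le (sq_nonneg (k3*a + k4*b - k5*c)),
      sq_nonneg ((k3^2*k4 - k3*k5 - k4^2)*b + k5*(k4 - k3^2)*c),
      mul_pos h5 (mul_self_pos.mpr hc)]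

/-- If `k₃ > 0`, `k₅ > 0`, `k₃²k₄ − k₃k₅ − k₄² > 0` and `k₃²k₄² − k₃³k₅ − k₄³ > 0`,
then `Z(k₃,k₄,k₅)` is positive definite. -/
theorem stmt4 (k3 k4 k5 : ℝ) (h1 : k3 > 0) (h2 : k5 > 0)
    (h3 : k3^2*k4 - k3*k5 - k4^2 > 0) (h4 : k3^2*k4^2 - k3^3*k5 - k4^3 > 0) :
    (Zmat k3 k4 k5).PosDef := by
  rw [Matrix.posDef_iff_dotProduct_mulVec]
  constructor
  · ext i j
    fin_cases i <;> fin_cases j <;> simp [Zmat, Matrix.conjTranspose_apply]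
  · intro x hx
    have hx' : x 0 ≠ 0 ∨ x 1 ≠ 0 ∨ x 2 ≠ 0 := by
      by_contra h
      push_neg at h
      apply hx
      ext i
      fin_cases i <;> simp [h.1, h.2.1, h.2.2]
    have hq := quad_pos k3 k4 k5 (x 0) (x 1) (x 2) h1 h2 h3 h4 hx'
    have he : dotProduct (star x) (Zmat k3 k4 k5 *ᵥ x) =
        k3*(x 0)^2 + (k3*k4 - k5)*(x 1)^2 + k4*k5*(x 2)^2 + 2*k4*(x 0)*(x 1)
          - 2*k5*(x 0)*(x 2) - 2*k3*k5*(x 1)*(x 2) := by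
      simp [Zmat, dotProduct, mulVec, Fin.sum_univ_three]
      ring
    rw [he]
    exact hq
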